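/- Let $Q \in \mathbb{R}$ and $\mu > 0$, and let $V(x) = Q\, \frac{e^{-\mu |x|}}{|x|}$ on $\mathbb{R}^3$. Then $\max\{\|V\|_R, \|V\|_{\mathcal{K}}\} < 4\pi$ if and only if $|Q| < \mu$. -/

import Mathlib

open MeasureTheory Real

open Set Metric

local notation "E3" => EuclideanSpace ℝ (Fin 3)

theorem my_lintegral_polar (f : ℝ → ENNReal) (hf : Measurable f) :
    ∫⁻ x : E3, f ‖x‖ = ((volume : Measure E3).toSphere univ) *
      ∫⁻ r in Ioi (0:ℝ), ENNReal.ofReal (r ^ 2) * f r := by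
  have h0 : Module.finrank ℝ E3 = 3 := by simp [finrank_euclideanSpace]
  have hmeas : Measurable fun p : sphere (0:E3) 1 × Ioi (0:ℝ) => f p.2.1 :=
    hf.comp (measurable_subtype_coe.comp measurable_snd)
  calc ∫⁻ x : E3, f ‖x‖ = ∫⁻ x : E3 in ({0}ᶜ : Set E3), f ‖x‖ := by
        rw [restrict_compl_singleton]
    _ = ∫⁻ x : ({0}ᶜ : Set E3), f ‖x.1‖ ∂((volume : Measure E3).comap Subtype.val) :=
        (lintegral_subtype_comap (measurableSet_singleton _).compl (fun a => f ‖a‖)).symm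
    _ = ∫⁻ x : ({0}ᶜ : Set E3), f ((homeomorphUnitSphereProd E3 x).2 : ℝ)
          ∂((volume : Measure E3).comap Subtype.val) := by
        refine lintegral_congr fun x => ?_
        rw [homeomorphUnitSphereProd_apply_snd_coe]
    _ = ∫⁻ p : sphere (0:E3) 1 × Ioi (0:ℝ), f p.2.1
          ∂((volume : Measure E3).toSphere.prod (Measure.volumeIoiPow (Module.finrank ℝ E3 - 1))) :=
        (Measure.measurePreserving_homeomorphUnitSphereProd (volume : Measure E3)).lintegral_comp
          hmeas
    _ = ((volume : Measure E3).toSphere univ) * ∫⁻ r : Ioi (0:ℝ), f r ∂(Measure.volumeIoiPow 2) := by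
        rw [h0]
        rw [lintegral_prod _ hmeas.aemeasurable]
        simp [lintegral_const, mul_comm]
    _ = ((volume : Measure E3).toSphere univ) * ∫⁻ r in Ioi (0:ℝ), ENNReal.ofReal (r ^ 2) * f r := by
        congr 1
        have hm1 : Measurable fun r : Ioi (0:ℝ) => ENNReal.ofReal ((r:ℝ) ^ 2) := by fun_prop
        have hm2 : Measurable fun r : Ioi (0:ℝ) => f (r:ℝ) := hf.comp measurable_subtype_coe
        rw [Measure.volumeIoiPow, lintegral_withDensity_eq_lintegral_mul _ hm1 hm2]
        exact lintegral_subtype_comap measurableSet_Ioi (fun r => ENNReal.ofReal (r ^ 2) * f r)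

theorem exp_1d (m : ℝ) (hm : 0 < m) : ∫ r in Ioi (0:ℝ), Real.exp (-(m*r)) = 1/m := by
  have h := integral_exp_neg_mul_rpow (p := 1) one_pos hm
  have h2 : ∫ x in Ioi (0:ℝ), Real.exp (-m * x ^ (1:ℝ)) = ∫ r in Ioi (0:ℝ), Real.exp (-(m*r)) := by
    refine setIntegral_congr_fun measurableSet_Ioi fun x hx => ?_
    rw [Real.rpow_one]; ring_nf
  rw [h2] at h
  rw [h]
  rw [show (-1/1 : ℝ) = -1 by norm_num, Real.rpow_neg_one]
  rw [show (1/1 + 1 : ℝ) = 2 by norm_num, Real.Gamma_two]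
  rw [mul_one, one_div]

theorem core_1d (m : ℝ) (hm : 0 < m) :
    ∫⁻ r in Ioi (0:ℝ), ENNReal.ofReal (Real.exp (-(m*r))) = ENNReal.ofReal (1/m) := by
  rw [← exp_1d m hm, ← ofReal_integral_eq_lintegral_ofReal]
  · have := exp_neg_integrableOn_Ioi 0 hm
    simp only [neg_mul] at this; exact this
  · filter_upwards with x using (Real.exp_pos _).le

theorem ball_vol : (volume (ball (0:E3) 1)) = ENNReal.ofReal (4 * π / 3) := by
  rw [EuclideanSpace.volume_ball]
  have hcard : Fintype.card (Fin 3) = 3 := by simp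
  rw [hcard]
  have hΓ : Real.Gamma ((3:ℕ) / 2 + 1) = 3/4 * Real.sqrt π := by
    rw [show ((3:ℕ):ℝ)/2 + 1 = 3/2 + 1 by norm_num]
    rw [Real.Gamma_add_one (by norm_num)]
    rw [show (3/2 : ℝ) = 1/2 + 1 by norm_num, Real.Gamma_add_one (by norm_num)]
    rw [Real.Gamma_one_half_eq]
    ring
  rw [hΓ]
  have hs : Real.sqrt π ≠ 0 := by positivity
  have hp3 : Real.sqrt π ^ 3 = π * Real.sqrt π := by
    rw [pow_succ, Real.sq_sqrt Real.pi_pos.le]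
  rw [hp3]
  rw [show (ENNReal.ofReal 1) ^ 3 = 1 by simp, one_mul]
  congr 1
  field_simp

theorem core3d (m : ℝ) (hm : 0 < m) :
    ∫⁻ y : E3, ENNReal.ofReal (Real.exp (-(m*‖y‖))) * ((ENNReal.ofReal ‖y‖)⁻¹)^2
      = ENNReal.ofReal (4 * π / m) := by
  have hmf : Measurable fun r : ℝ => ENNReal.ofReal (Real.exp (-(m*r))) * ((ENNReal.ofReal r)⁻¹)^2 := by
    fun_prop
  rw [my_lintegral_polar _ hmf]
  have h1 : ∫⁻ r in Ioi (0:ℝ), ENNReal.ofReal (r ^ 2) *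
      (ENNReal.ofReal (Real.exp (-(m*r))) * ((ENNReal.ofReal r)⁻¹)^2)
      = ∫⁻ r in Ioi (0:ℝ), ENNReal.ofReal (Real.exp (-(m*r))) := by
    refine setLIntegral_congr_fun measurableSet_Ioi ?_
    intro r hr
    have hr0 : (0:ℝ) < r := hr
    have hne : ENNReal.ofReal r ≠ 0 := by simp [hr0]
    have hnt : ENNReal.ofReal r ≠ ⊤ := ENNReal.ofReal_ne_top
    calc ENNReal.ofReal (r ^ 2) * (ENNReal.ofReal (Real.exp (-(m*r))) * ((ENNReal.ofReal r)⁻¹)^2)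
        = ((ENNReal.ofReal r) ^2 * ((ENNReal.ofReal r)⁻¹)^2) * ENNReal.ofReal (Real.exp (-(m*r))) := by
          rw [ENNReal.ofReal_pow hr0.le]; ring
      _ = ENNReal.ofReal (Real.exp (-(m*r))) := by
          rw [← mul_pow, ENNReal.mul_inv_cancel hne hnt, one_pow, one_mul]
  rw [h1, core_1d m hm]
  rw [Measure.toSphere_apply_univ, ball_vol]
  have h3 : Module.finrank ℝ E3 = 3 := by simp [finrank_euclideanSpace]
  rw [h3]
  rw [show ((3:ℕ) : ENNReal) = ENNReal.ofReal 3 by simp]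
  rw [← ENNReal.ofReal_mul (by norm_num), ← ENNReal.ofReal_mul (by positivity)]
  congr 1
  field_simp

theorem cheb_pt (f g : ℝ → ENNReal) (hf : Antitone f) (hg : Antitone g) {a b : ℝ} (hab : a ≤ b) :
    f b * g a + f a * g b ≤ f b * g b + f a * g a := by
  have h1 : g b ≤ g a := hg hab
  have h2 : f b ≤ f a := hf hab
  calc f b * g a + f a * g b = f b * ((g a - g b) + g b) + f a * g b := by
        rw [tsub_add_cancel_of_le h1]
    _ = f b * (g a - g b) + (f b * g b + f a * g b) := by ring
    _ ≤ f a * (g a - g b) + (f b * g b + f a * g b) := by gcongr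
    _ = f b * g b + f a * ((g a - g b) + g b) := by ring
    _ = f b * g b + f a * g a := by rw [tsub_add_cancel_of_le h1]

theorem null_bisector {x : E3} (hx : x ≠ 0) : volume {y : E3 | ‖x - y‖ = ‖y‖} = 0 := by
  have key : ∀ y : E3, (‖x - y‖ = ‖y‖) ↔ (inner ℝ x (y - (2:ℝ)⁻¹ • x) : ℝ) = 0 := by
    intro y
    rw [inner_sub_right, real_inner_smul_right, real_inner_self_eq_norm_sq]
    constructor
    · intro h
      have h2 : ‖x - y‖^2 = ‖y‖^2 := by rw [h]
      rw [@norm_sub_sq_real] at h2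
      nlinarith [h2]
    · intro h
      have h2 : ‖x - y‖^2 = ‖y‖^2 := by rw [@norm_sub_sq_real]; nlinarith
      calc ‖x - y‖ = Real.sqrt (‖x - y‖^2) := (Real.sqrt_sq (norm_nonneg _)).symm
        _ = Real.sqrt (‖y‖^2) := by rw [h2]
        _ = ‖y‖ := Real.sqrt_sq (norm_nonneg _)
  have hpre : (fun z : E3 => z + (2:ℝ)⁻¹ • x) ⁻¹' {y : E3 | ‖x - y‖ = ‖y‖}
      = {z : E3 | (inner ℝ x z : ℝ) = 0} := by
    ext z
    simp only [mem_preimage, mem_setOf_eq, key, add_sub_cancel_right]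
  rw [← measure_preimage_add_right volume ((2:ℝ)⁻¹ • x) _, hpre]
  have hker : {z : E3 | (inner ℝ x z : ℝ) = 0}
      = (LinearMap.ker ((innerSL ℝ x : E3 →L[ℝ] ℝ) : E3 →ₗ[ℝ] ℝ) : Set E3) := by
    ext z
    simp [LinearMap.mem_ker]
  rw [hker]
  refine Measure.addHaar_submodule volume _ fun h => hx ?_
  have hxmem : x ∈ LinearMap.ker ((innerSL ℝ x : E3 →L[ℝ] ℝ) : E3 →ₗ[ℝ] ℝ) := h ▸ trivial
  have : (inner ℝ x x : ℝ) = 0 := hxmem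
  exact inner_self_eq_zero.mp this

theorem reflection_bound (f g : ℝ → ENNReal) (hf : Antitone f) (hg : Antitone g)
    (hfm : Measurable f) (hgm : Measurable g) (x : E3) :
    ∫⁻ y : E3, f ‖y‖ * g ‖x - y‖ ≤ ∫⁻ y : E3, f ‖y‖ * g ‖y‖ := by
  rcases eq_or_ne x 0 with rfl | hx
  · simp only [zero_sub, norm_neg]; exact le_refl _
  set σ : E3 → E3 := fun y => x - y with hσdef
  have hσ : MeasurePreserving σ volume volume := Measure.measurePreserving_sub_left volume x
  have hσm : Measurable σ := measurable_const.sub measurable_id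
  set F : E3 → ENNReal := fun y => f ‖y‖ * g ‖x - y‖ with hF
  set F' : E3 → ENNReal := fun y => f ‖x - y‖ * g ‖y‖ with hF'
  set G : E3 → ENNReal := fun y => f ‖y‖ * g ‖y‖ with hG
  set G' : E3 → ENNReal := fun y => f ‖x - y‖ * g ‖x - y‖ with hG'
  have hnx : Measurable fun y : E3 => ‖x - y‖ := (measurable_const.sub measurable_id).norm
  have mF : Measurable F := (hfm.comp measurable_norm).mul (hgm.comp hnx)
  have mF' : Measurable F' := (hfm.comp hnx).mul (hgm.comp measurable_norm)
  have mG : Measurable G := (hfm.comp measurable_norm).mul (hgm.comp measurable_norm)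
  have mG' : Measurable G' := (hfm.comp hnx).mul (hgm.comp hnx)
  set A : Set E3 := {y | ‖x - y‖ ≤ ‖y‖} with hAdef
  have hA : MeasurableSet A := measurableSet_le hnx measurable_norm
  have helper : ∀ (T : Set E3) (_ : MeasurableSet T) (h : E3 → ENNReal) (_ : Measurable h),
      ∫⁻ y in T, h y = ∫⁻ z in σ ⁻¹' T, h (σ z) := by
    intro T hT h hh
    rw [← lintegral_indicator hT, ← lintegral_indicator (hσm hT)]
    rw [← hσ.lintegral_comp (hh.indicator hT)]
    refine lintegral_congr fun z => ?_
    by_cases hz : σ z ∈ T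
    · rw [Set.indicator_of_mem hz, Set.indicator_of_mem (show z ∈ σ ⁻¹' T from hz)]
    · rw [Set.indicator_of_notMem hz, Set.indicator_of_notMem (show z ∉ σ ⁻¹' T from hz)]
  have hFσ : ∀ z, F (σ z) = F' z := by
    intro z
    simp only [hF, hF', hσdef, sub_sub_cancel]
  have hGσ : ∀ z, G' (σ z) = G z := by
    intro z
    simp only [hG, hG', hσdef, sub_sub_cancel]
  have hpreAc : σ ⁻¹' Aᶜ = {z : E3 | ‖x - z‖ < ‖z‖} := by
    ext z
    simp only [mem_preimage, mem_compl_iff, hAdef, mem_setOf_eq, hσdef, sub_sub_cancel, not_le]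
  have hpreA : σ ⁻¹' A = {z : E3 | ‖z‖ ≤ ‖x - z‖} := by
    ext z
    simp only [mem_preimage, hAdef, mem_setOf_eq, hσdef, sub_sub_cancel]
  calc ∫⁻ y, F y = (∫⁻ y in A, F y) + ∫⁻ y in Aᶜ, F y := (lintegral_add_compl F hA).symm
    _ = (∫⁻ y in A, F y) + ∫⁻ z in {z : E3 | ‖x - z‖ < ‖z‖}, F' z := by
        rw [helper Aᶜ hA.compl F mF, hpreAc]
        congr 1
        exact lintegral_congr fun z => hFσ z
    _ ≤ (∫⁻ y in A, F y) + ∫⁻ z in A, F' z := by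
        gcongr
        intro z hz
        simp only [hAdef, mem_setOf_eq]
        exact le_of_lt hz
    _ = ∫⁻ y in A, (F y + F' y) := (lintegral_add_left mF _).symm
    _ ≤ ∫⁻ y in A, (G y + G' y) := by
        refine setLIntegral_mono (mG.add mG') fun y hy => ?_
        exact cheb_pt f g hf hg hy
    _ = (∫⁻ y in A, G y) + ∫⁻ y in A, G' y := lintegral_add_left mG _
    _ = (∫⁻ y in A, G y) + ∫⁻ z in {z : E3 | ‖z‖ ≤ ‖x - z‖}, G z := by
        rw [helper A hA G' mG', hpreA]
        congr 1
        exact lintegral_congr fun z => hGσ z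
    _ = (∫⁻ y in A, G y) + ∫⁻ z in {z : E3 | ‖z‖ ≤ ‖x - z‖} \ {z : E3 | ‖x - z‖ = ‖z‖}, G z := by
        congr 1
        refine setLIntegral_congr ?_
        exact ((MeasureTheory.diff_ae_eq_self).mpr
          (measure_mono_null Set.inter_subset_right (null_bisector hx))).symm
    _ ≤ (∫⁻ y in A, G y) + ∫⁻ z in Aᶜ, G z := by
        gcongr
        intro z hz
        simp only [hAdef, mem_compl_iff, mem_setOf_eq, not_le]
        rcases hz with ⟨h1, h2⟩
        simp only [mem_setOf_eq] at h1 h2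
        exact lt_of_le_of_ne h1 (fun hc => h2 hc.symm)
    _ = ∫⁻ y, G y := lintegral_add_compl G hA

noncomputable def fE (m t : ℝ) : ENNReal := ENNReal.ofReal (Real.exp (-(m*t)))
noncomputable def g1 (t : ℝ) : ENNReal := (ENNReal.ofReal t)⁻¹
noncomputable def fK (m t : ℝ) : ENNReal := fE m t * g1 t

theorem fE_anti {m : ℝ} (hm : 0 ≤ m) : Antitone (fE m) := by
  intro a b hab
  exact ENNReal.ofReal_le_ofReal (Real.exp_le_exp.2 (by nlinarith))

theorem g1_anti : Antitone g1 := by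
  intro a b hab
  exact ENNReal.inv_le_inv' (ENNReal.ofReal_le_ofReal hab)

theorem g1sq_anti : Antitone (fun t => (g1 t)^2) := by
  intro a b hab
  exact pow_le_pow_left' (g1_anti hab) 2

theorem fK_anti {m : ℝ} (hm : 0 ≤ m) : Antitone (fK m) := by
  intro a b hab
  exact mul_le_mul' (fE_anti hm hab) (g1_anti hab)

theorem fE_meas (m : ℝ) : Measurable (fE m) := by unfold fE; fun_prop
theorem g1_meas : Measurable g1 := by unfold g1; fun_prop
theorem g1sq_meas : Measurable (fun t => (g1 t)^2) := by unfold g1; fun_prop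
theorem fK_meas (m : ℝ) : Measurable (fK m) := by unfold fK fE g1; fun_prop

theorem core3d' (m : ℝ) (hm : 0 < m) :
    ∫⁻ y : E3, fK m ‖y‖ * g1 ‖y‖ = ENNReal.ofReal (4 * π / m) := by
  rw [← core3d m hm]
  refine lintegral_congr fun y => ?_
  simp only [fK, fE, g1, pow_two]
  ring

theorem core3d'' (m : ℝ) (hm : 0 < m) :
    ∫⁻ y : E3, fE m ‖y‖ * (g1 ‖y‖)^2 = ENNReal.ofReal (4 * π / m) := by
  rw [← core3d m hm]
  exact lintegral_congr fun y => rfl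

theorem kato_refl (m : ℝ) (hm : 0 < m) (x : E3) :
    ∫⁻ y : E3, fK m ‖y‖ * g1 ‖x - y‖ ≤ ENNReal.ofReal (4 * π / m) :=
  (reflection_bound (fK m) g1 (fK_anti hm.le) g1_anti (fK_meas m) g1_meas x).trans_eq
    (core3d' m hm)

theorem amgm_ennreal (a b : ENNReal) : 2 * (a * b) ≤ a^2 + b^2 := by
  rcases eq_or_ne a ⊤ with rfl | ha
  · rcases eq_or_ne b 0 with rfl | hb
    · simp
    · have h : (⊤:ENNReal)^2 + b^2 = ⊤ := by simp [pow_two]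
      rw [h]; exact le_top
  rcases eq_or_ne b ⊤ with rfl | hb
  · have h : a^2 + (⊤:ENNReal)^2 = ⊤ := by simp [pow_two]
    rw [h]; exact le_top
  lift a to NNReal using ha
  lift b to NNReal using hb
  rw [← ENNReal.coe_mul, ← ENNReal.coe_pow, ← ENNReal.coe_pow, ← ENNReal.coe_add,
    show ((2:ENNReal)) = ((2:NNReal):ENNReal) by norm_num, ← ENNReal.coe_mul,
    ENNReal.coe_le_coe, ← NNReal.coe_le_coe]
  push_cast
  nlinarith [sq_nonneg ((a:ℝ) - (b:ℝ))]

theorem rollnik_double (m : ℝ) (hm : 0 < m) :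
    ∫⁻ p : E3 × E3, fK m ‖p.1‖ * fK m ‖p.2‖ * (g1 ‖p.1 - p.2‖)^2
      ≤ (ENNReal.ofReal (4 * π / m))^2 := by
  have m1 : Measurable fun p : E3 × E3 => ‖p.1‖ := measurable_fst.norm
  have m2 : Measurable fun p : E3 × E3 => ‖p.2‖ := measurable_snd.norm
  have m12 : Measurable fun p : E3 × E3 => ‖p.1 - p.2‖ := (measurable_fst.sub measurable_snd).norm
  set C := ENNReal.ofReal (4 * π / m) with hC
  set W : E3 × E3 → ENNReal := fun p => fE m ‖p.1‖ * fE m ‖p.2‖ * (g1 ‖p.1 - p.2‖)^2 with hW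
  set H1 : E3 × E3 → ENNReal := fun p => W p * (g1 ‖p.1‖)^2 with hH1
  set H2 : E3 × E3 → ENNReal := fun p => W p * (g1 ‖p.2‖)^2 with hH2
  have mW : Measurable W :=
    (((fE_meas m).comp m1).mul ((fE_meas m).comp m2)).mul (g1sq_meas.comp m12)
  have mH1 : Measurable H1 := mW.mul (g1sq_meas.comp m1)
  have mH2 : Measurable H2 := mW.mul (g1sq_meas.comp m2)
  have mS : Measurable fun p : E3 × E3 => fK m ‖p.1‖ * fK m ‖p.2‖ * (g1 ‖p.1 - p.2‖)^2 :=
    (((fK_meas m).comp m1).mul ((fK_meas m).comp m2)).mul (g1sq_meas.comp m12)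
  set S := ∫⁻ p : E3 × E3, fK m ‖p.1‖ * fK m ‖p.2‖ * (g1 ‖p.1 - p.2‖)^2 with hS
  set T1 := ∫⁻ p : E3 × E3, H1 p with hT1
  set T2 := ∫⁻ p : E3 × E3, H2 p with hT2
  -- T2 = T1 by swapping
  have hswap : T2 = T1 := by
    have hswpt : ∀ p : E3 × E3, H1 (Prod.swap p) = H2 p := by
      intro p
      simp only [hH1, hH2, hW, Prod.swap, Prod.fst, Prod.snd]
      rw [norm_sub_rev]
      ring
    calc T2 = ∫⁻ p : E3 × E3, H1 (Prod.swap p) := (lintegral_congr fun p => (hswpt p)).symm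
      _ = T1 := by
        rw [hT1, Measure.volume_eq_prod]
        exact (Measure.measurePreserving_swap).lintegral_comp mH1
  -- 2 * S ≤ T1 + T2
  have h2S : 2 * S ≤ T1 + T2 := by
    calc 2 * S = ∫⁻ p : E3 × E3, 2 * (fK m ‖p.1‖ * fK m ‖p.2‖ * (g1 ‖p.1 - p.2‖)^2) := by
          rw [hS, lintegral_const_mul 2 mS]
      _ ≤ ∫⁻ p : E3 × E3, (H1 p + H2 p) := by
          refine lintegral_mono fun p => ?_
          have hrw : fK m ‖p.1‖ * fK m ‖p.2‖ * (g1 ‖p.1 - p.2‖)^2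
              = W p * (g1 ‖p.1‖ * g1 ‖p.2‖) := by
            simp only [hW, fK]
            ring
          rw [hrw, hH1, hH2, ← mul_add, mul_comm (2:ENNReal) _, mul_assoc]
          refine mul_le_mul_right ?_ (W p)
          rw [mul_comm (g1 ‖p.1‖ * g1 ‖p.2‖) 2]
          exact amgm_ennreal _ _
      _ = T1 + T2 := lintegral_add_left mH1 _
  -- T1 ≤ C^2
  have hT1le : T1 ≤ C^2 := by
    have hinner : ∀ a : E3, ∫⁻ b : E3, fE m ‖b‖ * (g1 ‖a - b‖)^2 ≤ C := by
      intro a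
      refine (reflection_bound (fE m) (fun t => (g1 t)^2) (fE_anti hm.le) g1sq_anti
        (fE_meas m) g1sq_meas a).trans_eq ?_
      exact core3d'' m hm
    calc T1 = ∫⁻ a : E3, ∫⁻ b : E3, (fE m ‖a‖ * (g1 ‖a‖)^2) * (fE m ‖b‖ * (g1 ‖a - b‖)^2) := by
          rw [hT1, Measure.volume_eq_prod]
          rw [lintegral_prod _ mH1.aemeasurable]
          refine lintegral_congr fun a => lintegral_congr fun b => ?_
          simp only [hH1, hW]
          ring
      _ = ∫⁻ a : E3, (fE m ‖a‖ * (g1 ‖a‖)^2) * ∫⁻ b : E3, (fE m ‖b‖ * (g1 ‖a - b‖)^2) := by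
          refine lintegral_congr fun a => ?_
          have mb : Measurable (fun b : E3 => fE m ‖b‖ * (g1 ‖a - b‖)^2) :=
            ((fE_meas m).comp measurable_norm).mul
              (g1sq_meas.comp ((measurable_const.sub measurable_id).norm))
          rw [lintegral_const_mul _ mb]
      _ ≤ ∫⁻ a : E3, (fE m ‖a‖ * (g1 ‖a‖)^2) * C := by
          refine lintegral_mono fun a => ?_
          exact mul_le_mul_right (hinner a) _
      _ = (∫⁻ a : E3, fE m ‖a‖ * (g1 ‖a‖)^2) * C := by
          have ma : Measurable (fun a : E3 => fE m ‖a‖ * (g1 ‖a‖)^2) :=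
            ((fE_meas m).comp measurable_norm).mul (g1sq_meas.comp measurable_norm)
          exact lintegral_mul_const _ ma
      _ = C * C := by rw [core3d'' m hm]
      _ = C^2 := (pow_two C).symm
  have : 2 * S ≤ 2 * C^2 := by
    calc 2 * S ≤ T1 + T2 := h2S
      _ = 2 * T1 := by rw [hswap, two_mul]
      _ ≤ 2 * C^2 := mul_le_mul_right hT1le 2
  exact (ENNReal.mul_le_mul_iff_right two_ne_zero ENNReal.ofNat_ne_top).mp this

/-- The Rollnik norm of a potential `V` on `ℝ³`. -/
noncomputable def rollnikNorm (V : EuclideanSpace ℝ (Fin 3) → ℂ) : ℝ :=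
  Real.sqrt (∫ p : EuclideanSpace ℝ (Fin 3) × EuclideanSpace ℝ (Fin 3),
    ‖V p.1 * V p.2‖ / ‖p.1 - p.2‖ ^ 2)

/-- The Kato norm of a potential `V` on `ℝ³`. -/
noncomputable def katoNorm (V : EuclideanSpace ℝ (Fin 3) → ℂ) : ℝ :=
  ⨆ x : EuclideanSpace ℝ (Fin 3),
    ∫ y : EuclideanSpace ℝ (Fin 3), ‖V y‖ / ‖x - y‖

theorem yukawa_smallness_iff (Q μ : ℝ) (hμ : 0 < μ)
    (V : EuclideanSpace ℝ (Fin 3) → ℂ)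
    (hV : ∀ x, V x = (Q : ℂ) * Real.exp (-μ * ‖x‖) / (‖x‖ : ℂ)) :
    max (rollnikNorm V) (katoNorm V) < 4 * Real.pi ↔ |Q| < μ := by
  have habs : ∀ y : E3, ‖V y‖ = |Q| * Real.exp (-(μ*‖y‖)) / ‖y‖ := by
    intro y
    rw [hV y, norm_div, norm_mul, Complex.norm_real, Complex.norm_real, Complex.norm_real,
      Real.norm_eq_abs, Real.norm_eq_abs, Real.norm_eq_abs, Real.abs_exp, abs_norm, neg_mul]
  set q : ENNReal := ENNReal.ofReal |Q| with hq
  set C : ENNReal := ENNReal.ofReal (4*π/μ) with hCdef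
  set B : ℝ := |Q| * (4*π/μ) with hBdef
  have hB0 : 0 ≤ B := by positivity
  have hqC : (q * C).toReal = B := by
    rw [hq, hCdef, ← ENNReal.ofReal_mul (abs_nonneg Q), ENNReal.toReal_ofReal (by positivity)]
  -- Kato part
  have haeK : ∀ x : E3, (fun y : E3 => ENNReal.ofReal (‖V y‖ / ‖x - y‖))
      =ᵐ[volume] (fun y => q * (fK μ ‖y‖ * g1 ‖x - y‖)) := by
    intro x
    have h0 : ∀ᵐ y : E3 ∂volume, y ≠ (0:E3) := by
      rw [ae_iff]
      simp only [ne_eq, not_not, Set.setOf_eq_eq_singleton]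
      exact measure_singleton _
    have hx0 : ∀ᵐ y : E3 ∂volume, y ≠ x := by
      rw [ae_iff]
      simp only [ne_eq, not_not, Set.setOf_eq_eq_singleton]
      exact measure_singleton _
    filter_upwards [h0, hx0] with y hy0 hyx
    have hny : 0 < ‖y‖ := norm_pos_iff.2 hy0
    have hnxy : 0 < ‖x - y‖ := by
      rw [norm_pos_iff, sub_ne_zero]
      exact fun h => hyx h.symm
    rw [habs y]
    rw [ENNReal.ofReal_div_of_pos hnxy, ENNReal.ofReal_div_of_pos hny,
      ENNReal.ofReal_mul (abs_nonneg Q)]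
    simp only [fK, fE, g1, div_eq_mul_inv, hq]
    ring
  have hmK : ∀ x : E3, Measurable fun y : E3 => fK μ ‖y‖ * g1 ‖x - y‖ := fun x =>
    ((fK_meas μ).comp measurable_norm).mul
      (g1_meas.comp ((measurable_const.sub measurable_id).norm))
  have hKreal : ∀ x : E3, (∫ y : E3, ‖V y‖ / ‖x - y‖)
      = (q * ∫⁻ y : E3, fK μ ‖y‖ * g1 ‖x - y‖).toReal := by
    intro x
    rw [MeasureTheory.integral_eq_lintegral_of_nonneg_ae]
    · rw [lintegral_congr_ae (haeK x), lintegral_const_mul q (hmK x)]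
    · exact Filter.Eventually.of_forall fun y => div_nonneg (norm_nonneg _) (norm_nonneg _)
    · have hfun : (fun y : E3 => ‖V y‖ / ‖x - y‖)
          = fun y => (|Q| * Real.exp (-(μ*‖y‖)) / ‖y‖) / ‖x - y‖ := funext fun y => by rw [habs y]
      rw [hfun]
      exact Measurable.aestronglyMeasurable (by fun_prop)
  have hKub : ∀ x : E3, (∫ y : E3, ‖V y‖ / ‖x - y‖) ≤ B := by
    intro x
    rw [hKreal x, ← hqC]
    refine ENNReal.toReal_mono (ENNReal.mul_ne_top ENNReal.ofReal_ne_top ENNReal.ofReal_ne_top) ?_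
    exact mul_le_mul_right (kato_refl μ hμ x) q
  have hK0 : (∫ y : E3, ‖V y‖ / ‖(0:E3) - y‖) = B := by
    rw [hKreal 0, ← hqC]
    congr 2
    have : ∀ y : E3, fK μ ‖y‖ * g1 ‖(0:E3) - y‖ = fK μ ‖y‖ * g1 ‖y‖ := by
      intro y; rw [zero_sub, norm_neg]
    rw [lintegral_congr this]
    exact core3d' μ hμ
  have hkato : katoNorm V = B := by
    refine le_antisymm (ciSup_le hKub) ?_
    have hbdd : BddAbove (Set.range fun x : E3 => ∫ y : E3, ‖V y‖ / ‖x - y‖) := by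
      refine ⟨B, ?_⟩
      rintro r ⟨x, rfl⟩
      exact hKub x
    calc B = ∫ y : E3, ‖V y‖ / ‖(0:E3) - y‖ := hK0.symm
      _ ≤ katoNorm V := le_ciSup hbdd 0
  -- Rollnik part
  have hmR : Measurable fun p : E3 × E3 => fK μ ‖p.1‖ * fK μ ‖p.2‖ * (g1 ‖p.1 - p.2‖)^2 :=
    (((fK_meas μ).comp measurable_fst.norm).mul ((fK_meas μ).comp measurable_snd.norm)).mul
      (g1sq_meas.comp (measurable_fst.sub measurable_snd).norm)
  have haeR : (fun p : E3 × E3 => ENNReal.ofReal (‖V p.1 * V p.2‖ / ‖p.1 - p.2‖^2))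
      =ᵐ[volume] fun p => q^2 * (fK μ ‖p.1‖ * fK μ ‖p.2‖ * (g1 ‖p.1 - p.2‖)^2) := by
    have h1 : ∀ᵐ p : E3 × E3 ∂volume, p.1 ≠ 0 := by
      rw [ae_iff]
      have hst : {p : E3 × E3 | ¬ p.1 ≠ 0} = ({0} : Set E3) ×ˢ (univ : Set E3) := by
        ext p
        simp only [ne_eq, not_not, mem_setOf_eq, Set.mem_prod, Set.mem_singleton_iff,
          Set.mem_univ, and_true]
      rw [hst, Measure.volume_eq_prod, Measure.prod_prod]
      simp
    have h2 : ∀ᵐ p : E3 × E3 ∂volume, p.2 ≠ 0 := by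
      rw [ae_iff]
      have hst : {p : E3 × E3 | ¬ p.2 ≠ 0} = (univ : Set E3) ×ˢ ({0} : Set E3) := by
        ext p
        simp only [ne_eq, not_not, mem_setOf_eq, Set.mem_prod, Set.mem_singleton_iff,
          Set.mem_univ, true_and]
      rw [hst, Measure.volume_eq_prod, Measure.prod_prod]
      simp
    have h3 : ∀ᵐ p : E3 × E3 ∂volume, p.1 ≠ p.2 := by
      rw [ae_iff]
      have hst : {p : E3 × E3 | ¬ p.1 ≠ p.2}
          = (fun p : E3 × E3 => (p.1 - p.2, p.2)) ⁻¹' (({0} : Set E3) ×ˢ (univ : Set E3)) := by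
        ext p
        simp only [ne_eq, not_not, mem_setOf_eq, mem_preimage, Set.mem_prod,
          Set.mem_singleton_iff, Set.mem_univ, and_true, sub_eq_zero]
      rw [hst, Measure.volume_eq_prod]
      rw [(measurePreserving_sub_prod volume volume).measure_preimage
        (((measurableSet_singleton (0:E3)).prod MeasurableSet.univ).nullMeasurableSet)]
      rw [Measure.prod_prod]
      simp
    filter_upwards [h1, h2, h3] with p hp1 hp2 hp12
    have hn1 : 0 < ‖p.1‖ := norm_pos_iff.2 hp1
    have hn2 : 0 < ‖p.2‖ := norm_pos_iff.2 hp2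
    have hn12 : 0 < ‖p.1 - p.2‖ := by rw [norm_pos_iff, sub_ne_zero]; exact hp12
    have hn12sq : 0 < ‖p.1 - p.2‖^2 := by positivity
    rw [norm_mul, habs p.1, habs p.2]
    rw [ENNReal.ofReal_div_of_pos hn12sq,
      ENNReal.ofReal_mul (by positivity : (0:ℝ) ≤ |Q| * Real.exp (-(μ*‖p.1‖)) / ‖p.1‖),
      ENNReal.ofReal_div_of_pos hn1, ENNReal.ofReal_div_of_pos hn2,
      ENNReal.ofReal_mul (abs_nonneg Q), ENNReal.ofReal_mul (abs_nonneg Q),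
      ENNReal.ofReal_pow (norm_nonneg _)]
    simp only [fK, fE, g1, div_eq_mul_inv, ENNReal.inv_pow, hq]
    ring
  have hRreal : (∫ p : E3 × E3, ‖V p.1 * V p.2‖ / ‖p.1 - p.2‖^2) ≤ B^2 := by
    rw [MeasureTheory.integral_eq_lintegral_of_nonneg_ae]
    · have hle : ∫⁻ p : E3 × E3, ENNReal.ofReal (‖V p.1 * V p.2‖ / ‖p.1 - p.2‖^2)
          ≤ (q * C)^2 := by
        rw [lintegral_congr_ae haeR, lintegral_const_mul _ hmR]
        calc q^2 * ∫⁻ p : E3 × E3, fK μ ‖p.1‖ * fK μ ‖p.2‖ * (g1 ‖p.1 - p.2‖)^2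
            ≤ q^2 * C^2 := mul_le_mul_right (rollnik_double μ hμ) _
          _ = (q * C)^2 := (mul_pow q C 2).symm
      have := ENNReal.toReal_mono
        (ENNReal.pow_ne_top (ENNReal.mul_ne_top ENNReal.ofReal_ne_top ENNReal.ofReal_ne_top)) hle
      rw [ENNReal.toReal_pow, hqC] at this
      exact this
    · exact Filter.Eventually.of_forall fun p => div_nonneg (norm_nonneg _) (by positivity)
    · have hfun : (fun p : E3 × E3 => ‖V p.1 * V p.2‖ / ‖p.1 - p.2‖^2)
          = fun p => ((|Q| * Real.exp (-(μ*‖p.1‖)) / ‖p.1‖) * (|Q| * Real.exp (-(μ*‖p.2‖)) / ‖p.2‖))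
              / ‖p.1 - p.2‖^2 := by
        funext p
        rw [norm_mul, habs p.1, habs p.2]
      rw [hfun]
      exact Measurable.aestronglyMeasurable (by fun_prop)
  have hroll : rollnikNorm V ≤ B := by
    rw [rollnikNorm]
    calc Real.sqrt (∫ p : E3 × E3, ‖V p.1 * V p.2‖ / ‖p.1 - p.2‖^2)
        ≤ Real.sqrt (B^2) := Real.sqrt_le_sqrt hRreal
      _ = B := by rw [Real.sqrt_sq hB0]
  -- conclusion
  have h4π : (0:ℝ) < 4*π := by positivity
  constructor
  · intro h
    have hlt : B < 4*π := by
      rw [← hkato]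
      exact lt_of_le_of_lt (le_max_right _ _) h
    rw [hBdef] at hlt
    have h2 : (4*π) * |Q| < (4*π) * μ := by
      have := mul_lt_mul_of_pos_right hlt hμ
      calc (4*π) * |Q| = |Q| * (4*π/μ) * μ := by field_simp
        _ < (4*π) * μ := this
    exact lt_of_mul_lt_mul_left h2 h4π.le
  · intro h
    have hBlt : B < 4*π := by
      rw [hBdef]
      calc |Q| * (4*π/μ) < μ * (4*π/μ) := by
            exact mul_lt_mul_of_pos_right h (by positivity)
        _ = 4*π := by field_simp
    exact max_lt (lt_of_le_of_lt hroll hBlt) (hkato ▸ hBlt)
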